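/- Let X₁,…,Xₙ ∈ ℝ^d with mean X̄ = (1/n)∑ᵢ Xᵢ and population variance σ² = (1/n)∑ᵢ ‖Xᵢ − X̄‖². If X_{π₁},…,X_{π_t} are sampled uniformly without replacement from {X₁,…,Xₙ} (t ≤ n) and a ∈ ℝ₊^t, then E[‖∑ᵢ₌₁^t aᵢ X_{πᵢ} − (∑ᵢ₌₁^t aᵢ) X̄‖²] ≤ ‖a‖² σ². -/

import Mathlib

open Finset RealInnerProductSpace

/-- Weighted sampling without replacement: if `X_{π 1}, …, X_{π t}` are sampled uniformly
without replacement from `{X_1, …, X_n}` (modeled via a uniformly random permutation `π`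
of `Fin n` restricted to the first `t` indices) and `a ∈ ℝ₊^t`, then
`E[‖∑ i, a i • X (π i) − (∑ i, a i) • X̄‖²] ≤ ‖a‖² σ²`. -/
theorem weighted_sampling_without_replacement {d n t : ℕ} (ht : t ≤ n)
    (X : Fin n → EuclideanSpace ℝ (Fin d)) (a : Fin t → ℝ) (ha : ∀ i, 0 ≤ a i)
    (Xbar : EuclideanSpace ℝ (Fin d)) (hXbar : Xbar = (1 / (n : ℝ)) • ∑ i, X i)
    (σ2 : ℝ) (hσ2 : σ2 = (1 / (n : ℝ)) * ∑ i, ‖X i - Xbar‖ ^ 2) :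
    (∑ π : Equiv.Perm (Fin n),
        ‖∑ i : Fin t, a i • X (π (Fin.castLE ht i)) - (∑ i : Fin t, a i) • Xbar‖ ^ 2) /
      (Fintype.card (Equiv.Perm (Fin n)) : ℝ)
      ≤ (∑ i : Fin t, (a i) ^ 2) * σ2 := by
  classical
  rcases Nat.eq_zero_or_pos n with hn | hn
  · subst hn
    have ht0 : t = 0 := Nat.le_zero.mp ht
    subst ht0
    simp
  have hn0 : (n : ℝ) ≠ 0 := Nat.cast_ne_zero.mpr hn.ne'
  set Y : Fin n → EuclideanSpace ℝ (Fin d) := fun i => X i - Xbar with hY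
  have hY0 : ∑ i, Y i = 0 := by
    simp only [hY, Finset.sum_sub_distrib, Finset.sum_const, Finset.card_univ,
      Fintype.card_fin, hXbar, smul_smul]
    rw [← Nat.cast_smul_eq_nsmul ℝ, smul_smul, mul_one_div_cancel hn0, one_smul, sub_self]
  have hσ2' : ∑ i, ‖Y i‖ ^ 2 = n * σ2 := by
    rw [hσ2]; field_simp; rfl
  have hσpos : 0 ≤ σ2 := by
    have h1 : 0 ≤ ∑ i, ‖X i - Xbar‖ ^ 2 := Finset.sum_nonneg fun i _ => sq_nonneg _
    rw [hσ2]; positivity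
  set N : ℝ := (Fintype.card (Equiv.Perm (Fin n)) : ℝ) with hN
  have hNpos : 0 < N := by
    simp [hN]
    exact Fintype.card_pos
  set F : Fin n → Fin n → ℝ :=
    fun u v => ∑ π : Equiv.Perm (Fin n), (inner ℝ (Y (π u)) (Y (π v)) : ℝ) with hF
  have reindex : ∀ (τ : Equiv.Perm (Fin n)) (g : Equiv.Perm (Fin n) → ℝ),
      ∑ π : Equiv.Perm (Fin n), g (π * τ) = ∑ π : Equiv.Perm (Fin n), g π :=
    fun τ g => Equiv.sum_comp (Equiv.mulRight τ) g
  have happ : ∀ (π τ : Equiv.Perm (Fin n)) (u : Fin n), (π * τ) u = π (τ u) := fun _ _ _ => rfl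
  have hFmap : ∀ (τ : Equiv.Perm (Fin n)) (u v : Fin n), F (τ u) (τ v) = F u v := by
    intro τ u v
    exact reindex τ (fun π => (inner ℝ (Y (π u)) (Y (π v)) : ℝ))
  have hFeq : ∀ u v u' v' : Fin n, u ≠ v → u' ≠ v' → F u v = F u' v' := by
    intro u v u' v' huv hu'v'
    set τ₁ := Equiv.swap u u' with hτ1
    set τ₂ := Equiv.swap (τ₁ v) v' with hτ2
    have h1 : (τ₂ * τ₁) u = u' := by
      have hne1 : u' ≠ τ₁ v := fun h => huv (τ₁.injective (by simp [hτ1, ← h]; exact h))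
      rw [happ, hτ1, Equiv.swap_apply_left, hτ2,
        Equiv.swap_apply_of_ne_of_ne hne1 hu'v']
    have h2 : (τ₂ * τ₁) v = v' := by simp [happ, hτ2]
    calc F u v = F ((τ₂ * τ₁) u) ((τ₂ * τ₁) v) := (hFmap _ _ _).symm
    _ = F u' v' := by rw [h1, h2]
  have hFdiag : ∀ u : Fin n, F u u = N * σ2 := by
    intro u
    have hall : ∀ v : Fin n, F v v = F u u := by
      intro v
      have := hFmap (Equiv.swap u v) u u
      simpa [Equiv.swap_apply_left] using this
    have hsum : ∑ v : Fin n, F v v = N * (n * σ2) := by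
      rw [hF]
      rw [Finset.sum_comm]
      have : ∀ π : Equiv.Perm (Fin n), ∑ v : Fin n, (inner ℝ (Y (π v)) (Y (π v)) : ℝ) = n * σ2 := by
        intro π
        rw [Equiv.sum_comp π (fun k => (inner ℝ (Y k) (Y k) : ℝ))]
        rw [← hσ2']
        exact Finset.sum_congr rfl fun k _ => real_inner_self_eq_norm_sq _
      rw [Finset.sum_congr rfl fun π _ => this π, Finset.sum_const, Finset.card_univ,
        nsmul_eq_mul]
    rw [Finset.sum_congr rfl fun v _ => hall v, Finset.sum_const, Finset.card_univ,
      Fintype.card_fin, nsmul_eq_mul] at hsum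
    have : (n : ℝ) * F u u = (n : ℝ) * (N * σ2) := by rw [hsum]; ring
    exact mul_left_cancel₀ hn0 this
  have hFoff : ∀ u v : Fin n, u ≠ v → F u v ≤ 0 := by
    intro u v huv
    have htot : ∑ u' : Fin n, ∑ v' : Fin n, F u' v' = 0 := by
      have step1 : ∀ u' : Fin n, ∑ v' : Fin n, F u' v' = 0 := by
        intro u'
        rw [hF]
        rw [Finset.sum_comm]
        have hz : ∀ π : Equiv.Perm (Fin n),
            ∑ v' : Fin n, (inner ℝ (Y (π u')) (Y (π v')) : ℝ) = 0 := by
          intro π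
          rw [← inner_sum, Equiv.sum_comp π Y, hY0, inner_zero_right]
        rw [Finset.sum_congr rfl fun π _ => hz π, Finset.sum_const, smul_zero]
      rw [Finset.sum_congr rfl fun u' _ => step1 u', Finset.sum_const, smul_zero]
    have hsplit : ∑ u' : Fin n, ∑ v' ∈ Finset.univ.erase u', F u' v'
        = - (n * (N * σ2)) := by
      have : ∀ u' : Fin n, ∑ v' ∈ Finset.univ.erase u', F u' v'
          = (∑ v' : Fin n, F u' v') - F u' u' := by
        intro u'
        rw [← Finset.add_sum_erase _ _ (Finset.mem_univ u')]
        ring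
      rw [Finset.sum_congr rfl fun u' _ => this u', Finset.sum_sub_distrib, htot,
        Finset.sum_congr rfl fun u' _ => hFdiag u', Finset.sum_const, Finset.card_univ,
        Fintype.card_fin, nsmul_eq_mul]
      ring
    have hconst : ∑ u' : Fin n, ∑ v' ∈ Finset.univ.erase u', F u' v'
        = (n * (n - 1) : ℝ) * F u v := by
      have : ∀ u' : Fin n, ∀ v' ∈ Finset.univ.erase u', F u' v' = F u v := by
        intro u' v' hv'
        exact hFeq u' v' u v (Finset.mem_erase.mp hv').1.symm huv
      have hval : ∀ u' : Fin n, ∑ v' ∈ Finset.univ.erase u', F u' v'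
          = ((n : ℝ) - 1) * F u v := by
        intro u'
        rw [Finset.sum_congr rfl (this u'), Finset.sum_const,
          Finset.card_erase_of_mem (Finset.mem_univ _), Finset.card_univ,
          Fintype.card_fin, nsmul_eq_mul, Nat.cast_sub hn]
        push_cast
        ring
      rw [Finset.sum_congr rfl fun u' _ => hval u', Finset.sum_const, Finset.card_univ,
        Fintype.card_fin, nsmul_eq_mul]
      ring
    have hn2 : (2 : ℕ) ≤ n := by
      have : 1 < Fintype.card (Fin n) := Fintype.one_lt_card_iff.mpr ⟨u, v, huv⟩
      simp at this; omega
    have hpos : (0 : ℝ) < n * (n - 1) := by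
      have h1 : (2 : ℝ) ≤ n := by exact_mod_cast hn2
      nlinarith
    have := hconst ▸ hsplit
    nlinarith [mul_nonneg (mul_nonneg (Nat.cast_nonneg n : (0:ℝ) ≤ n) hNpos.le) hσpos]
  -- main computation
  rw [div_le_iff₀ hNpos]
  have hrw : ∀ π : Equiv.Perm (Fin n),
      ‖∑ i : Fin t, a i • X (π (Fin.castLE ht i)) - (∑ i : Fin t, a i) • Xbar‖ ^ 2
      = ∑ i : Fin t, ∑ j : Fin t,
          a i * a j * (inner ℝ (Y (π (Fin.castLE ht i))) (Y (π (Fin.castLE ht j))) : ℝ) := by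
    intro π
    have h1 : ∑ i : Fin t, a i • X (π (Fin.castLE ht i)) - (∑ i : Fin t, a i) • Xbar
        = ∑ i : Fin t, a i • Y (π (Fin.castLE ht i)) := by
      simp [hY, smul_sub, Finset.sum_sub_distrib, ← Finset.sum_smul]
    rw [h1, ← real_inner_self_eq_norm_sq, sum_inner]
    refine Finset.sum_congr rfl fun i _ => ?_
    rw [inner_sum]
    refine Finset.sum_congr rfl fun j _ => ?_
    rw [real_inner_smul_left, real_inner_smul_right]
    ring
  have hswap : ∑ π : Equiv.Perm (Fin n),
      ‖∑ i : Fin t, a i • X (π (Fin.castLE ht i)) - (∑ i : Fin t, a i) • Xbar‖ ^ 2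
      = ∑ i : Fin t, ∑ j : Fin t,
          a i * a j * F (Fin.castLE ht i) (Fin.castLE ht j) := by
    rw [Finset.sum_congr rfl fun π _ => hrw π, Finset.sum_comm]
    refine Finset.sum_congr rfl fun i _ => ?_
    rw [Finset.sum_comm]
    refine Finset.sum_congr rfl fun j _ => ?_
    rw [hF, Finset.mul_sum]
  rw [hswap]
  have hbound : ∀ i : Fin t,
      ∑ j : Fin t, a i * a j * F (Fin.castLE ht i) (Fin.castLE ht j)
      ≤ a i ^ 2 * (N * σ2) := by
    intro i
    rw [← Finset.add_sum_erase _ _ (Finset.mem_univ i)]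
    have hdiag : a i * a i * F (Fin.castLE ht i) (Fin.castLE ht i) = a i ^ 2 * (N * σ2) := by
      rw [hFdiag]
      ring
    have hrest : ∑ j ∈ Finset.univ.erase i,
        a i * a j * F (Fin.castLE ht i) (Fin.castLE ht j) ≤ 0 := by
      refine Finset.sum_nonpos fun j hj => ?_
      have hne : Fin.castLE ht i ≠ Fin.castLE ht j := by
        intro h
        exact (Finset.mem_erase.mp hj).1 (Fin.castLE_injective ht h).symm
      exact mul_nonpos_of_nonneg_of_nonpos (mul_nonneg (ha i) (ha j)) (hFoff _ _ hne)
    linarith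
  calc ∑ i : Fin t, ∑ j : Fin t, a i * a j * F (Fin.castLE ht i) (Fin.castLE ht j)
      ≤ ∑ i : Fin t, a i ^ 2 * (N * σ2) := Finset.sum_le_sum fun i _ => hbound i
    _ = (∑ i : Fin t, a i ^ 2) * σ2 * N := by rw [← Finset.sum_mul]; ring
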